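/- The map M ↦ (M⁻¹ + K)⁻¹ is concave on positive definite matrices: for positive definite A, B, a positive semidefinite K, and 0 < ε < 1, (((1−ε)A + εB)⁻¹ + K)⁻¹ ⪰ (1−ε)(A⁻¹+K)⁻¹ + ε(B⁻¹+K)⁻¹. -/

import Mathlib

set_option linter.unusedSectionVars false

open Matrix

section Aux

variable {n : Type*} [Fintype n] [DecidableEq n]

lemma psd_smul_aux {M : Matrix n n ℝ} (hM : M.PosSemidef) {c : ℝ} (hc : 0 ≤ c) :
    (c • M).PosSemidef := by
  constructor
  · unfold Matrix.IsHermitian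
    rw [conjTranspose_smul, hM.isHermitian.eq]
    simp
  · exact (hM.smul hc).2

/-- Pure algebra: Woodbury right-inverse check. -/
lemma alg_woodbury (M Mi L T : Matrix n n ℝ) (hMi : Mi * M = 1)
    (hT : (1 + Lᴴ * M * L) * T = 1) :
    (Mi + L * Lᴴ) * (M - M * L * T * (Lᴴ * M)) = 1 := by
  have e1 : (Mi + L * Lᴴ) * (M - M * L * T * (Lᴴ * M))
      = Mi * M + L * Lᴴ * M - (Mi * M) * (L * T * (Lᴴ * M))
        - L * (Lᴴ * M * L) * T * (Lᴴ * M) := by noncomm_ring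
  have e2 : L * T * (Lᴴ * M) + L * (Lᴴ * M * L) * T * (Lᴴ * M)
      = L * ((1 + Lᴴ * M * L) * T) * (Lᴴ * M) := by noncomm_ring
  rw [e1, hMi, one_mul]
  have e3 : (1:Matrix n n ℝ) + L * Lᴴ * M - L * T * (Lᴴ * M) - L * (Lᴴ * M * L) * T * (Lᴴ * M)
      = 1 + L * Lᴴ * M - (L * T * (Lᴴ * M) + L * (Lᴴ * M * L) * T * (Lᴴ * M)) := by abel
  rw [e3, e2, hT]
  noncomm_ring

/-- Woodbury identity. -/
lemma woodbury (M L : Matrix n n ℝ) (hM : M.PosDef) :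
    (M⁻¹ + L * Lᴴ)⁻¹ = M - M * L * (1 + Lᴴ * M * L)⁻¹ * (Lᴴ * M) := by
  have hS : (1 + Lᴴ * M * L).PosDef :=
    Matrix.PosDef.add_posSemidef Matrix.PosDef.one
      (hM.posSemidef.conjTranspose_mul_mul_same L)
  exact Matrix.inv_eq_right_inv
    (alg_woodbury M M⁻¹ L _ (Matrix.nonsing_inv_mul M hM.det_pos.ne'.isUnit)
      (Matrix.mul_nonsing_inv _ (Matrix.isUnit_iff_isUnit_det _ |>.1 hS.isUnit)))

/-- Quadratic completion: difference from optimum is a PSD square. -/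
lemma quad_diff (M L V T : Matrix n n ℝ)
    (hST : (1 + Lᴴ * M * L) * T = 1) (hTS : T * (1 + Lᴴ * M * L) = 1)
    (hTh : Tᴴ = T) (hMh : Mᴴ = M) :
    (M - V * (Lᴴ * M) - M * L * Vᴴ + V * (1 + Lᴴ * M * L) * Vᴴ)
      - (M - M * L * T * (Lᴴ * M))
    = (V - M * L * T) * (1 + Lᴴ * M * L) * (V - M * L * T)ᴴ := by
  have hTh2 : Tᵀ = T := by simpa using hTh
  have hMh2 : Mᵀ = M := by simpa using hMh
  have hconj : (V - M * L * T)ᴴ = Vᴴ - T * (Lᴴ * M) := by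
    simp [conjTranspose_sub, conjTranspose_mul, hTh2, hMh2, Matrix.mul_assoc]
  rw [hconj]
  have e1 : (V - M * L * T) * (1 + Lᴴ * M * L) * (Vᴴ - T * (Lᴴ * M))
      = V * (1 + Lᴴ * M * L) * Vᴴ - V * ((1 + Lᴴ * M * L) * T) * (Lᴴ * M)
        - M * L * (T * (1 + Lᴴ * M * L)) * Vᴴ
        + M * L * (T * (1 + Lᴴ * M * L)) * (T * (Lᴴ * M)) := by noncomm_ring
  rw [e1, hST, hTS]
  noncomm_ring

lemma pd_smul_aux {M : Matrix n n ℝ} (hM : M.PosDef) {c : ℝ} (hc : 0 < c) :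
    (c • M).PosDef := by
  constructor
  · unfold Matrix.IsHermitian
    rw [conjTranspose_smul, hM.isHermitian.eq]
    simp
  · exact (hM.smul hc).2

end Aux

/-- Loewner concavity of `M ↦ (M⁻¹ + K)⁻¹` on positive definite matrices. -/
theorem inv_add_inv_loewner_concave {p : ℕ} (A B K : Matrix (Fin p) (Fin p) ℝ)
    (hA : A.PosDef) (hB : B.PosDef) (hK : K.PosSemidef)
    (ε : ℝ) (hε0 : 0 < ε) (hε1 : ε < 1) :
    ((((1 - ε) • A + ε • B)⁻¹ + K)⁻¹
      - ((1 - ε) • (A⁻¹ + K)⁻¹ + ε • (B⁻¹ + K)⁻¹)).PosSemidef := by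
  have hε1' : 0 < 1 - ε := by linarith
  obtain ⟨L, hLL⟩ : ∃ L : Matrix (Fin p) (Fin p) ℝ, L * Lᴴ = K := by
    open scoped MatrixOrder in
    obtain ⟨M, hM⟩ := CStarAlgebra.nonneg_iff_eq_star_mul_self.mp hK.nonneg
    exact ⟨Mᴴ, by rw [hM, conjTranspose_conjTranspose, star_eq_conjTranspose]⟩
  set C := (1 - ε) • A + ε • B with hCdef
  have hC : C.PosDef := (pd_smul_aux hA hε1').add (pd_smul_aux hB hε0)
  -- positive definite S matrices
  have hSA : (1 + Lᴴ * A * L).PosDef :=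
    Matrix.PosDef.add_posSemidef Matrix.PosDef.one
      (hA.posSemidef.conjTranspose_mul_mul_same L)
  have hSB : (1 + Lᴴ * B * L).PosDef :=
    Matrix.PosDef.add_posSemidef Matrix.PosDef.one
      (hB.posSemidef.conjTranspose_mul_mul_same L)
  have hSC : (1 + Lᴴ * C * L).PosDef :=
    Matrix.PosDef.add_posSemidef Matrix.PosDef.one
      (hC.posSemidef.conjTranspose_mul_mul_same L)
  set TA := (1 + Lᴴ * A * L)⁻¹ with hTAdef
  set TB := (1 + Lᴴ * B * L)⁻¹ with hTBdef
  set TC := (1 + Lᴴ * C * L)⁻¹ with hTCdef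
  have hSTA : (1 + Lᴴ * A * L) * TA = 1 := Matrix.mul_nonsing_inv _ hSA.det_pos.ne'.isUnit
  have hTSA : TA * (1 + Lᴴ * A * L) = 1 := Matrix.nonsing_inv_mul _ hSA.det_pos.ne'.isUnit
  have hSTB : (1 + Lᴴ * B * L) * TB = 1 := Matrix.mul_nonsing_inv _ hSB.det_pos.ne'.isUnit
  have hTSB : TB * (1 + Lᴴ * B * L) = 1 := Matrix.nonsing_inv_mul _ hSB.det_pos.ne'.isUnit
  have hSTC : (1 + Lᴴ * C * L) * TC = 1 := Matrix.mul_nonsing_inv _ hSC.det_pos.ne'.isUnit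
  have hTSC : TC * (1 + Lᴴ * C * L) = 1 := Matrix.nonsing_inv_mul _ hSC.det_pos.ne'.isUnit
  have hTAh : TAᴴ = TA := hSA.isHermitian.inv.eq
  have hTBh : TBᴴ = TB := hSB.isHermitian.inv.eq
  have hTCh : TCᴴ = TC := hSC.isHermitian.inv.eq
  -- Woodbury identities
  have hgA : (A⁻¹ + K)⁻¹ = A - A * L * TA * (Lᴴ * A) := by
    rw [← hLL]; exact woodbury A L hA
  have hgB : (B⁻¹ + K)⁻¹ = B - B * L * TB * (Lᴴ * B) := by
    rw [← hLL]; exact woodbury B L hB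
  have hgC : (C⁻¹ + K)⁻¹ = C - C * L * TC * (Lᴴ * C) := by
    rw [← hLL]; exact woodbury C L hC
  set V := C * L * TC with hVdef
  -- the affine majorant evaluated at C equals the value at C
  have hXC : C - V * (Lᴴ * C) - C * L * Vᴴ + V * (1 + Lᴴ * C * L) * Vᴴ
      = C - C * L * TC * (Lᴴ * C) := by
    have h := quad_diff C L V TC hSTC hTSC hTCh hC.isHermitian.eq
    have h0 : V - C * L * TC = 0 := by rw [hVdef]; exact sub_self _
    rw [h0, Matrix.zero_mul, Matrix.zero_mul] at h
    exact sub_eq_zero.mp h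
  have haff : C - V * (Lᴴ * C) - C * L * Vᴴ + V * (1 + Lᴴ * C * L) * Vᴴ
      = (1 - ε) • (A - V * (Lᴴ * A) - A * L * Vᴴ + V * (1 + Lᴴ * A * L) * Vᴴ)
        + ε • (B - V * (Lᴴ * B) - B * L * Vᴴ + V * (1 + Lᴴ * B * L) * Vᴴ) := by
    rw [hCdef]
    simp only [Matrix.mul_add, Matrix.add_mul, Matrix.mul_smul, Matrix.smul_mul,
      smul_add, smul_sub]
    module
  have key : (C⁻¹ + K)⁻¹ - ((1 - ε) • (A⁻¹ + K)⁻¹ + ε • (B⁻¹ + K)⁻¹)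
      = (1 - ε) • ((A - V * (Lᴴ * A) - A * L * Vᴴ + V * (1 + Lᴴ * A * L) * Vᴴ)
            - (A⁻¹ + K)⁻¹)
        + ε • ((B - V * (Lᴴ * B) - B * L * Vᴴ + V * (1 + Lᴴ * B * L) * Vᴴ)
            - (B⁻¹ + K)⁻¹) := by
    rw [hgC, ← hXC, haff, smul_sub, smul_sub]
    abel
  have qA : (A - V * (Lᴴ * A) - A * L * Vᴴ + V * (1 + Lᴴ * A * L) * Vᴴ) - (A⁻¹ + K)⁻¹
      = (V - A * L * TA) * (1 + Lᴴ * A * L) * (V - A * L * TA)ᴴ := by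
    rw [hgA]; exact quad_diff A L V TA hSTA hTSA hTAh hA.isHermitian.eq
  have qB : (B - V * (Lᴴ * B) - B * L * Vᴴ + V * (1 + Lᴴ * B * L) * Vᴴ) - (B⁻¹ + K)⁻¹
      = (V - B * L * TB) * (1 + Lᴴ * B * L) * (V - B * L * TB)ᴴ := by
    rw [hgB]; exact quad_diff B L V TB hSTB hTSB hTBh hB.isHermitian.eq
  rw [key, qA, qB]
  exact Matrix.PosSemidef.add
    (psd_smul_aux (hSA.posSemidef.mul_mul_conjTranspose_same _) hε1'.le)
    (psd_smul_aux (hSB.posSemidef.mul_mul_conjTranspose_same _) hε0.le)
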